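/- Define c : ℕ → ℕ → ℕ by c n k = f_{(3n−k, k, 0)} where f and g are as below. Then for all n, the sum over all pairs (a,b,c) of nonnegative integers with a ≥ b ≥ c, a+b+c = 3n of the multiplicity f_{(a,b,c)}, restricted to partitions with at most two parts (c = 0), satisfies: Σ_{k=0}^{⌊3n/2⌋} f_{(3n−k,k,0)} = Σ_{k=0}^{⌊3(n−4)/2⌋} f_{(3(n−4)−k,k,0)} + n (for n ≥ 4), where the extra n counts the terms s_{3n} and s_{3n−k,k} for 2 ≤ k ≤ n. -/

import Mathlib

/-- The recursive function `g` from the paper. -/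
def g (i ω : ℕ) : ℕ :=
  if _ : 6 ≤ i then g (i - 6) ω + 1
  else if ω = 0 then (if i = 0 ∨ i = 2 then 0 else 1)
  else if i = 4 ∧ ω = 1 then 1 else 0
termination_by i
decreasing_by omega

/-- Thrall's multiplicity `f` for a partition `(l1, l2, l3)` (natural subtraction). -/
def thrallF (l1 l2 l3 : ℕ) : ℕ :=
  g (min (1 + l1 - l2) (1 + l2 - l3)) (l2 % 2)

/-- A structurally computable closed form for `g`. -/
def g' (i w : ℕ) : ℕ :=
  i / 6 + (if w = 0 then (if i % 6 = 0 ∨ i % 6 = 2 then 0 else 1)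
           else if i % 6 = 4 ∧ w = 1 then 1 else 0)

lemma gg : ∀ i w, g i w = g' i w := by
  intro i w
  induction i using Nat.strong_induction_on with
  | _ i ih =>
    rw [g]
    by_cases h : 6 ≤ i
    · rw [dif_pos h, ih (i - 6) (by omega)]
      have h1 : (i - 6) % 6 = i % 6 := by omega
      simp only [g', h1]
      omega
    · rw [dif_neg h]
      have h1 : i % 6 = i := Nat.mod_eq_of_lt (by omega)
      have h2 : i / 6 = 0 := Nat.div_eq_of_lt (by omega)
      simp only [g', h1, h2, Nat.zero_add]

lemma g6 (i w : ℕ) : g (i + 6) w = g i w + 1 := by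
  rw [g]
  have h : 6 ≤ i + 6 := by omega
  rw [dif_pos h]
  have e : i + 6 - 6 = i := by omega
  rw [e]

def S (n : ℕ) : ℕ := ∑ k ∈ Finset.range (3 * n / 2 + 1), thrallF (3 * n - k) k 0

lemma split (m : ℕ) : S m = (∑ k ∈ Finset.range (m + 1), g (k + 1) (k % 2)) +
    ∑ k ∈ Finset.Ico (m + 1) (3 * m / 2 + 1), g (3 * m - 2 * k + 1) (k % 2) := by
  unfold S
  rw [Finset.range_eq_Ico,
    ← Finset.sum_Ico_consecutive _ (Nat.zero_le (m + 1)) (show m + 1 ≤ 3 * m / 2 + 1 by omega),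
    ← Finset.range_eq_Ico]
  congr 1
  · apply Finset.sum_congr rfl
    intro k hk
    rw [Finset.mem_range] at hk
    unfold thrallF
    have h1 : min (1 + (3 * m - k) - k) (1 + k - 0) = k + 1 := by omega
    rw [h1]
  · apply Finset.sum_congr rfl
    intro k hk
    rw [Finset.mem_Ico] at hk
    unfold thrallF
    have h1 : min (1 + (3 * m - k) - k) (1 + k - 0) = 3 * m - 2 * k + 1 := by omega
    rw [h1]

lemma E : ∀ n : ℕ, (∑ k ∈ Finset.Ico (n + 7) (n + 19), g (k + 1) (k % 2)) +
    (∑ k ∈ Finset.Ico (n + 1) (n + 7), g (3 * (n + 6) - 2 * k + 1) (k % 2)) = 3 * n + 42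
  | 0 => by simp only [gg]; decide
  | 1 => by simp only [gg]; decide
  | 2 => by simp only [gg]; decide
  | 3 => by simp only [gg]; decide
  | 4 => by simp only [gg]; decide
  | 5 => by simp only [gg]; decide
  | (m + 6) => by
    have hA : (∑ k ∈ Finset.Ico (m + 6 + 7) (m + 6 + 19), g (k + 1) (k % 2)) =
        (∑ k ∈ Finset.Ico (m + 7) (m + 19), g (k + 1) (k % 2)) + 12 := by
      rw [Finset.sum_Ico_eq_sum_range, Finset.sum_Ico_eq_sum_range]
      have c1 : m + 6 + 19 - (m + 6 + 7) = 12 := by omega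
      have c2 : m + 19 - (m + 7) = 12 := by omega
      rw [c1, c2]
      have h1 : ∀ k ∈ Finset.range 12, g (m + 6 + 7 + k + 1) ((m + 6 + 7 + k) % 2) =
          g (m + 7 + k + 1) ((m + 7 + k) % 2) + 1 := by
        intro k _
        have e1 : m + 6 + 7 + k + 1 = (m + 7 + k + 1) + 6 := by omega
        have e2 : (m + 6 + 7 + k) % 2 = (m + 7 + k) % 2 := by omega
        rw [e1, e2, g6]
      rw [Finset.sum_congr rfl h1, Finset.sum_add_distrib, Finset.sum_const]
      simp
    have hB : (∑ k ∈ Finset.Ico (m + 6 + 1) (m + 6 + 7), g (3 * (m + 6 + 6) - 2 * k + 1) (k % 2)) =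
        (∑ k ∈ Finset.Ico (m + 1) (m + 7), g (3 * (m + 6) - 2 * k + 1) (k % 2)) + 6 := by
      rw [Finset.sum_Ico_eq_sum_range, Finset.sum_Ico_eq_sum_range]
      have c1 : m + 6 + 7 - (m + 6 + 1) = 6 := by omega
      have c2 : m + 7 - (m + 1) = 6 := by omega
      rw [c1, c2]
      have h1 : ∀ k ∈ Finset.range 6, g (3 * (m + 6 + 6) - 2 * (m + 6 + 1 + k) + 1) ((m + 6 + 1 + k) % 2) =
          g (3 * (m + 6) - 2 * (m + 1 + k) + 1) ((m + 1 + k) % 2) + 1 := by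
        intro k hk
        rw [Finset.mem_range] at hk
        have e1 : 3 * (m + 6 + 6) - 2 * (m + 6 + 1 + k) + 1 = (3 * (m + 6) - 2 * (m + 1 + k) + 1) + 6 := by
          omega
        have e2 : (m + 6 + 1 + k) % 2 = (m + 1 + k) % 2 := by omega
        rw [e1, e2, g6]
      rw [Finset.sum_congr rfl h1, Finset.sum_add_distrib, Finset.sum_const]
      simp
    have hE := E m
    omega

lemma K (n : ℕ) : S (n + 18) = S (n + 6) + (3 * n + 42) := by
  rw [split (n + 18), split (n + 6)]
  have b1 : 3 * (n + 18) / 2 + 1 = 3 * n / 2 + 28 := by omega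
  have b2 : 3 * (n + 6) / 2 + 1 = 3 * n / 2 + 10 := by omega
  rw [b1, b2]
  have s1 : (∑ k ∈ Finset.range (n + 18 + 1), g (k + 1) (k % 2)) =
      (∑ k ∈ Finset.range (n + 6 + 1), g (k + 1) (k % 2)) +
        ∑ k ∈ Finset.Ico (n + 7) (n + 19), g (k + 1) (k % 2) := by
    rw [Finset.range_eq_Ico, Finset.range_eq_Ico]
    rw [show n + 6 + 1 = n + 7 by omega, show n + 18 + 1 = n + 19 by omega]
    exact (Finset.sum_Ico_consecutive (fun k => g (k + 1) (k % 2)) (show 0 ≤ n + 7 by omega) (show n + 7 ≤ n + 19 by omega)).symm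
  have s2 : (∑ k ∈ Finset.Ico (n + 18 + 1) (3 * n / 2 + 28), g (3 * (n + 18) - 2 * k + 1) (k % 2)) =
      ∑ k ∈ Finset.Ico (n + 1) (3 * n / 2 + 10), g (3 * (n + 6) - 2 * k + 1) (k % 2) := by
    rw [Finset.sum_Ico_eq_sum_range, Finset.sum_Ico_eq_sum_range]
    have c : 3 * n / 2 + 28 - (n + 18 + 1) = 3 * n / 2 + 10 - (n + 1) := by omega
    rw [c]
    apply Finset.sum_congr rfl
    intro i _
    congr 1
    · omega
    · omega
  have s3 : (∑ k ∈ Finset.Ico (n + 1) (3 * n / 2 + 10), g (3 * (n + 6) - 2 * k + 1) (k % 2)) =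
      (∑ k ∈ Finset.Ico (n + 1) (n + 7), g (3 * (n + 6) - 2 * k + 1) (k % 2)) +
        ∑ k ∈ Finset.Ico (n + 7) (3 * n / 2 + 10), g (3 * (n + 6) - 2 * k + 1) (k % 2) :=
    (Finset.sum_Ico_consecutive _ (show n + 1 ≤ n + 7 by omega) (show n + 7 ≤ 3 * n / 2 + 10 by omega)).symm
  have s4 : (∑ k ∈ Finset.Ico (n + 6 + 1) (3 * n / 2 + 10), g (3 * (n + 6) - 2 * k + 1) (k % 2)) =
      ∑ k ∈ Finset.Ico (n + 7) (3 * n / 2 + 10), g (3 * (n + 6) - 2 * k + 1) (k % 2) := by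
    rw [show n + 6 + 1 = n + 7 by omega]
  rw [s1, s2, s3, s4]
  have hE := E n
  omega

theorem thrallF_two_row_sum (n : ℕ) (hn : 4 ≤ n) :
    (∑ k ∈ Finset.range (3 * n / 2 + 1), thrallF (3 * n - k) k 0) =
      (∑ k ∈ Finset.range (3 * (n - 4) / 2 + 1), thrallF (3 * (n - 4) - k) k 0) + n := by
  show S n = S (n - 4) + n
  induction n using Nat.strong_induction_on with
  | _ n ih =>
    by_cases h : n ≤ 21
    · interval_cases n <;> simp only [S, thrallF, gg] <;> decide
    · obtain ⟨m, rfl⟩ : ∃ m, n = m + 22 := ⟨n - 22, by omega⟩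
      have h1 : S (m + 22) = S (m + 10) + (3 * m + 54) := by
        have hk := K (m + 4)
        rw [show m + 4 + 18 = m + 22 by omega, show m + 4 + 6 = m + 10 by omega] at hk
        omega
      have h2 := K m
      have h3 := ih (m + 10) (by omega) (by omega)
      have e1 : m + 10 - 4 = m + 6 := by omega
      have e2 : m + 22 - 4 = m + 18 := by omega
      rw [e1] at h3
      rw [e2]
      omega
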